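/- Let (R,Δ) be an odd form ring, n ∈ ℕ, I an involution invariant ideal of R, σ ∈ U_{2n+1}(R,Δ), and u ∈ M with u_i ∈ I for all i ∈ Θ_hb. Then q(σu) ∸ q(u) ∸ ((q(σ_{*0}) ∸ (1,0))•u₀) ∈ Ω^I_min, where σ_{*0} denotes the 0-th column of σ. -/

import Mathlib

open scoped BigOperators

noncomputable section

/-- The index set `Θ = {-n, …, n}` for the odd-dimensional unitary group. -/
abbrev Idx (n : ℕ) : Type := {i : ℤ // i ∈ Finset.Icc (-(n : ℤ)) (n : ℤ)}

namespace Idx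

/-- Negation of an index. -/
def neg {n : ℕ} (i : Idx n) : Idx n :=
  ⟨-i.1, by have h := i.2; rw [Finset.mem_Icc] at h ⊢; omega⟩

/-- The index `0`. -/
def zero (n : ℕ) : Idx n := ⟨0, by rw [Finset.mem_Icc]; omega⟩

/-- Construct an index from an integer. -/
def of (n : ℕ) (i : ℤ) (h1 : -(n : ℤ) ≤ i) (h2 : i ≤ (n : ℤ)) : Idx n :=
  ⟨i, Finset.mem_Icc.mpr ⟨h1, h2⟩⟩

end Idx

/-- The positive indices `{1, …, n}`. -/
def posIdx (n : ℕ) : Finset (Idx n) := Finset.univ.filter (fun i => 0 < i.1)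

/-- The position of an index in the ordering `1, …, n, 0, -n, …, -1`. -/
def ordIdx {n : ℕ} (i : Idx n) : ℤ :=
  if 0 < i.1 then i.1 else if i.1 = 0 then (n : ℤ) + 1 else 2 * (n : ℤ) + 2 + i.1

/-- The group `GL_{2n+1}(R)` of invertible `(2n+1) × (2n+1)` matrices. -/
abbrev GLn (R : Type*) [Ring R] (n : ℕ) : Type _ := (Matrix (Idx n) (Idx n) R)ˣ

/-- `J(Ω) = {y | ∃ z, (y, z) ∈ Ω}`. -/
def JSet {R : Type*} (Ω : Set (R × R)) : Set R := {y | ∃ z, (y, z) ∈ Ω}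

/-- `M(R, Δ) = {u | u_0 ∈ J(Δ)}`. -/
def MRD {R : Type*} (Δ : Set (R × R)) (n : ℕ) : Set (Idx n → R) :=
  {u | u (Idx.zero n) ∈ JSet Δ}

/-- `M(I, Ω) = {u | u_i ∈ I for i ∈ Θ_hb, u_0 ∈ J(Ω)}`. -/
def MIO {R : Type*} (I : Set R) (Ω : Set (R × R)) (n : ℕ) : Set (Idx n → R) :=
  {u | (∀ i : Idx n, i.1 ≠ 0 → u i ∈ I) ∧ u (Idx.zero n) ∈ JSet Ω}

/-- The data of an odd quadruple `(R, ⁻, λ, μ)`: a ring with an anti-isomorphism `bar`,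
a symmetry `lam` and an element `mu` with `mu = bar mu * lam`. -/
structure OddFormRingData (R : Type*) [Ring R] where
  bar : R → R
  lam : R
  mu : R
  bar_bijective : Function.Bijective bar
  bar_add : ∀ x y : R, bar (x + y) = bar x + bar y
  bar_mul : ∀ x y : R, bar (x * y) = bar y * bar x
  bar_one : bar 1 = 1
  bar_bar : ∀ x : R, bar (bar x) = lam * x * bar lam
  mu_symm : mu = bar mu * lam

namespace OddFormRingData

variable {R : Type*} [Ring R] (D : OddFormRingData R)

/-- Heisenberg addition `∔` on `R × R`. -/
def hAdd (a b : R × R) : R × R := (a.1 + b.1, a.2 + b.2 - D.bar a.1 * D.mu * b.1)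

/-- Heisenberg negation. -/
def hNeg (a : R × R) : R × R := (-a.1, -a.2 - D.bar a.1 * D.mu * a.1)

/-- Heisenberg subtraction `∸`. -/
def hSub (a b : R × R) : R × R := D.hAdd a (D.hNeg b)

/-- The scalar operation `(x, y) • a = (x a, ā y a)`. -/
def hSMul (a : R × R) (r : R) : R × R := (a.1 * r, D.bar r * a.2 * r)

/-- `Δ_min = {(0, x - x̄ λ) | x ∈ R}`. -/
def DeltaMin : Set (R × R) := {p | ∃ x : R, p = (0, x - D.bar x * D.lam)}

/-- `Δ_max = {(x, y) | x̄ μ x + y + ȳ λ = 0}`. -/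
def DeltaMax : Set (R × R) := {p | D.bar p.1 * D.mu * p.1 + p.2 + D.bar p.2 * D.lam = 0}

/-- `Δ` is an odd form parameter. -/
structure IsFormParam (Δ : Set (R × R)) : Prop where
  add_mem : ∀ a ∈ Δ, ∀ b ∈ Δ, D.hAdd a b ∈ Δ
  neg_mem : ∀ a ∈ Δ, D.hNeg a ∈ Δ
  smul_mem : ∀ a ∈ Δ, ∀ r : R, D.hSMul a r ∈ Δ
  min_le : D.DeltaMin ⊆ Δ
  le_max : Δ ⊆ D.DeltaMax

/-- `I` is an involution invariant (two-sided) ideal of `R`. -/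
structure IsInvIdeal (I : Set R) : Prop where
  zero_mem : (0 : R) ∈ I
  add_mem : ∀ x ∈ I, ∀ y ∈ I, x + y ∈ I
  neg_mem : ∀ x ∈ I, -x ∈ I
  mul_left : ∀ r : R, ∀ x ∈ I, r * x ∈ I
  mul_right : ∀ r : R, ∀ x ∈ I, x * r ∈ I
  bar_mem : ∀ x ∈ I, D.bar x ∈ I

/-- `Ĩ = {x | ȳ μ x ∈ I for all y ∈ J(Δ)}`. -/
def tildeI (Δ : Set (R × R)) (I : Set R) : Set R :=
  {x | ∀ y ∈ JSet Δ, D.bar y * D.mu * x ∈ I}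

/-- `Ω^I_min`, the `∔`-subgroup of `R × R` generated by `{(0, x - x̄λ) | x ∈ I}` and
`{a • c | a ∈ Δ, c ∈ I}`. -/
inductive OmegaMin (Δ : Set (R × R)) (I : Set R) : R × R → Prop
  | base (x : R) (hx : x ∈ I) : OmegaMin Δ I (0, x - D.bar x * D.lam)
  | smul (a : R × R) (ha : a ∈ Δ) (c : R) (hc : c ∈ I) : OmegaMin Δ I (D.hSMul a c)
  | add (a b : R × R) : OmegaMin Δ I a → OmegaMin Δ I b → OmegaMin Δ I (D.hAdd a b)
  | neg (a : R × R) : OmegaMin Δ I a → OmegaMin Δ I (D.hNeg a)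

/-- `Ω^I_min` as a set. -/
def OmegaMinSet (Δ : Set (R × R)) (I : Set R) : Set (R × R) := {p | D.OmegaMin Δ I p}

/-- `Ω^I_max = Δ ∩ (Ĩ × I)`. -/
def OmegaMaxSet (Δ : Set (R × R)) (I : Set R) : Set (R × R) :=
  {p | p ∈ Δ ∧ p.1 ∈ D.tildeI Δ I ∧ p.2 ∈ I}

/-- `Ω` is a relative odd form parameter for `I`. -/
structure IsRelFormParam (Δ : Set (R × R)) (I : Set R) (Ω : Set (R × R)) : Prop where
  add_mem : ∀ a ∈ Ω, ∀ b ∈ Ω, D.hAdd a b ∈ Ω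
  neg_mem : ∀ a ∈ Ω, D.hNeg a ∈ Ω
  smul_mem : ∀ a ∈ Ω, ∀ r : R, D.hSMul a r ∈ Ω
  min_le : D.OmegaMinSet Δ I ⊆ Ω
  le_max : Ω ⊆ D.OmegaMaxSet Δ I

/-- `(I, Ω)` is an odd form ideal of `(R, Δ)`. -/
def IsFormIdeal (Δ : Set (R × R)) (I : Set R) (Ω : Set (R × R)) : Prop :=
  D.IsInvIdeal I ∧ D.IsRelFormParam Δ I Ω

/-- `Ω^{-1} = {(x, y) | (x, ȳ) ∈ Ω}`. -/
def paramInv (Ω : Set (R × R)) : Set (R × R) := {p | (p.1, D.bar p.2) ∈ Ω}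

/-- `Ω^{-ε(i)}`. -/
def paramPow {n : ℕ} (Ω : Set (R × R)) (i : Idx n) : Set (R × R) :=
  if 0 < i.1 then D.paramInv Ω else Ω

/-- The λ-Hermitian form `b`. -/
def bform {n : ℕ} (u v : Idx n → R) : R :=
  (∑ i ∈ posIdx n, D.bar (u i) * v i.neg) + D.bar (u (Idx.zero n)) * D.mu * v (Idx.zero n)
    + ∑ i ∈ posIdx n, D.bar (u i.neg) * D.lam * v i

/-- The quadratic map `q`. -/
def qform {n : ℕ} (u : Idx n → R) : R × R :=
  (u (Idx.zero n), ∑ i ∈ posIdx n, D.bar (u i) * u i.neg)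

/-- The odd-dimensional unitary group `U_{2n+1}(R, Δ)`, as a subset of `GL_{2n+1}(R)`. -/
def unitary (Δ : Set (R × R)) (n : ℕ) : Set (GLn R n) :=
  {σ | (∀ u v : Idx n → R,
          D.bform (Matrix.mulVec σ.val u)
            (Matrix.mulVec σ.val v) = D.bform u v)
      ∧ ∀ u : Idx n → R,
          D.hSub (D.qform (Matrix.mulVec σ.val u)) (D.qform u) ∈ Δ}

/-- The short root matrix `T_{ij}(x)`. -/
def shortRootMat {n : ℕ} (i j : Idx n) (x : R) : Matrix (Idx n) (Idx n) R :=
  1 + Matrix.single i j x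
    - Matrix.single j.neg i.neg
        ((if 0 < j.1 then (1 : R) else D.bar D.lam) * D.bar x *
          (if 0 < i.1 then (1 : R) else D.lam))

/-- The extra short root matrix `T_i(x, y)`. -/
def extraShortRootMat {n : ℕ} (i : Idx n) (x y : R) : Matrix (Idx n) (Idx n) R :=
  1 + Matrix.single (Idx.zero n) i.neg x
    - Matrix.single i (Idx.zero n)
        ((if 0 < i.1 then D.bar D.lam else (1 : R)) * D.bar x * D.mu)
    + Matrix.single i i.neg y

/-- `g` is a short root matrix `T_{ij}(x)`. -/
def IsShortRootElem {n : ℕ} (g : GLn R n) : Prop :=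
  ∃ (i j : Idx n) (x : R), i.1 ≠ 0 ∧ j.1 ≠ 0 ∧ i.1 ≠ j.1 ∧ i.1 ≠ -j.1 ∧
    g.val = D.shortRootMat i j x

/-- `g` is an extra short root matrix `T_i(x, y)` with `(x, y) ∈ Δ^{-ε(i)}`. -/
def IsExtraShortRootElem {n : ℕ} (Δ : Set (R × R)) (g : GLn R n) : Prop :=
  ∃ (i : Idx n) (x y : R), i.1 ≠ 0 ∧ (x, y) ∈ D.paramPow Δ i ∧
    g.val = D.extraShortRootMat i x y

/-- The elementary subgroup `EU_{2n+1}(R, Δ)`. -/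
def elemGroup (Δ : Set (R × R)) (n : ℕ) : Subgroup (GLn R n) :=
  Subgroup.closure {g | D.IsShortRootElem g ∨ D.IsExtraShortRootElem Δ g}

/-- `g` is an `(I, Ω)`-elementary short root matrix. -/
def IsRelShortRootElem {n : ℕ} (I : Set R) (g : GLn R n) : Prop :=
  ∃ (i j : Idx n) (x : R), i.1 ≠ 0 ∧ j.1 ≠ 0 ∧ i.1 ≠ j.1 ∧ i.1 ≠ -j.1 ∧ x ∈ I ∧
    g.val = D.shortRootMat i j x

/-- `g` is an `(I, Ω)`-elementary extra short root matrix. -/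
def IsRelExtraShortRootElem {n : ℕ} (Ω : Set (R × R)) (g : GLn R n) : Prop :=
  ∃ (i : Idx n) (x y : R), i.1 ≠ 0 ∧ (x, y) ∈ D.paramPow Ω i ∧
    g.val = D.extraShortRootMat i x y

/-- The preelementary subgroup `EU_{2n+1}(I, Ω)`. -/
def preElemGroup (I : Set R) (Ω : Set (R × R)) (n : ℕ) : Subgroup (GLn R n) :=
  Subgroup.closure {g | D.IsRelShortRootElem I g ∨ D.IsRelExtraShortRootElem Ω g}

/-- The relative elementary subgroup `EU_{2n+1}((R, Δ), (I, Ω))`,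
the normal closure of `EU_{2n+1}(I, Ω)` in `EU_{2n+1}(R, Δ)`. -/
def elemRelGroup (Δ : Set (R × R)) (I : Set R) (Ω : Set (R × R)) (n : ℕ) : Subgroup (GLn R n) :=
  Subgroup.closure {x | ∃ e ∈ D.elemGroup Δ n, ∃ g ∈ D.preElemGroup I Ω n, x = e * g * e⁻¹}

/-- The principal congruence subgroup `U_{2n+1}((R, Δ), (I, Ω))`. -/
def principalCongruence (Δ : Set (R × R)) (I : Set R) (Ω : Set (R × R)) (n : ℕ) :
    Set (GLn R n) :=
  {σ | σ ∈ D.unitary Δ n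
      ∧ (∀ i j : Idx n, i.1 ≠ 0 → j.1 ≠ 0 →
          σ.val i j - (if i = j then (1 : R) else 0) ∈ I)
      ∧ ∀ u ∈ MRD Δ n,
          D.hSub (D.qform (Matrix.mulVec σ.val u)) (D.qform u) ∈ Ω}

/-- The group `Ũ_{2n+1}((R, Δ), (I, Ω))`. -/
def tildeU (Δ : Set (R × R)) (I : Set R) (Ω : Set (R × R)) (n : ℕ) : Set (GLn R n) :=
  {σ | σ ∈ D.unitary Δ n ∧ ∀ u ∈ MIO I Ω n,
      D.hSub (D.qform (Matrix.mulVec σ.val u)) (D.qform u) ∈ Ω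
      ∧ D.hSub (D.qform (Matrix.mulVec ((σ⁻¹).val) u)) (D.qform u) ∈ Ω}

/-- The full congruence subgroup `CU_{2n+1}((R, Δ), (I, Ω))`. -/
def fullCongruence (Δ : Set (R × R)) (I : Set R) (Ω : Set (R × R)) (n : ℕ) : Set (GLn R n) :=
  {σ | σ ∈ D.tildeU Δ I Ω n ∧ ∀ τ ∈ D.elemGroup Δ n,
      σ * τ * σ⁻¹ * τ⁻¹ ∈ D.principalCongruence Δ I Ω n}

/-- `H` is a subgroup of `U_{2n+1}(R, Δ)`. -/
structure IsSubgroupOfUnitary (Δ : Set (R × R)) (n : ℕ) (H : Set (GLn R n)) : Prop where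
  subset : H ⊆ D.unitary Δ n
  one_mem : (1 : GLn R n) ∈ H
  mul_mem : ∀ a ∈ H, ∀ b ∈ H, a * b ∈ H
  inv_mem : ∀ a ∈ H, a⁻¹ ∈ H

/-- `H` is normalized by the elementary subgroup `EU_{2n+1}(R, Δ)`. -/
def IsENormal (Δ : Set (R × R)) (n : ℕ) (H : Set (GLn R n)) : Prop :=
  ∀ e ∈ D.elemGroup Δ n, ∀ h ∈ H, e * h * e⁻¹ ∈ H

/-- The ideal part of the level of `H`. -/
def levelI {n : ℕ} (H : Set (GLn R n)) : Set R :=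
  {x | ∃ i j : Idx n, i.1 ≠ 0 ∧ j.1 ≠ 0 ∧ i.1 ≠ j.1 ∧ i.1 ≠ -j.1 ∧
      ∃ g ∈ H, g.val = D.shortRootMat i j x}

/-- The form parameter part of the level of `H`. -/
def levelOmega {n : ℕ} (Δ : Set (R × R)) (H : Set (GLn R n)) : Set (R × R) :=
  {p | p ∈ Δ ∧ ∃ i : Idx n, i.1 < 0 ∧
      ∃ g ∈ H, g.val = D.extraShortRootMat i p.1 p.2}

/-- The relative odd form parameter `^σΩ` for `I` defined by `Ω` and `σ`. -/
def transportedParam (Δ : Set (R × R)) (I : Set R) (Ω : Set (R × R)) (n : ℕ) (σ : GLn R n) :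
    Set (R × R) :=
  {p | ∃ x y : R, (x, y) ∈ Ω ∧ ∃ m ∈ D.OmegaMinSet Δ I,
      p = D.hAdd (D.hAdd
            (D.hSMul
              (D.hSub (D.qform (fun i => σ.val i (Idx.zero n)))
                ((1 : R), (0 : R))) x)
            (x, y)) m}

/-- `TEU_{2n+1}(R, Δ)`: upper triangular elementary matrices with ones on the diagonal,
with respect to the index ordering `1, …, n, 0, -n, …, -1`. -/
def upperTriangularElem (Δ : Set (R × R)) (n : ℕ) : Set (GLn R n) :=
  {f | f ∈ D.elemGroup Δ n
      ∧ (∀ i j : Idx n, ordIdx j < ordIdx i → f.val i j = 0)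
      ∧ ∀ i : Idx n, f.val i i = 1}

/-- `UEU_{2n+1}(R, Δ)`: elementary matrices of block form `(A B C; 0 1 D; 0 0 E)`
with respect to the decomposition `Θ₊, {0}, Θ₋`. -/
def blockUpperElem (Δ : Set (R × R)) (n : ℕ) : Set (GLn R n) :=
  {f | f ∈ D.elemGroup Δ n
      ∧ (∀ i j : Idx n, i.1 ≤ 0 → 0 < j.1 → f.val i j = 0)
      ∧ f.val (Idx.zero n) (Idx.zero n) = 1
      ∧ ∀ i : Idx n, i.1 < 0 → f.val i (Idx.zero n) = 0}

/-- `R` is quasifinite: it is the union of a directed family of subrings, each closed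
under the involution, containing `λ` and `μ`, and finitely generated as a module over its
center. -/
def IsQuasifinite : Prop :=
  ∃ S : Set (Subring R), S.Nonempty ∧ DirectedOn (· ≤ ·) S ∧
    (∀ A ∈ S, (∀ x ∈ A, D.bar x ∈ A) ∧ D.lam ∈ A ∧ D.mu ∈ A ∧
      ∃ (m : ℕ) (v : Fin m → R), (∀ k, v k ∈ A) ∧
        ∀ x ∈ A, ∃ c : Fin m → R,
          (∀ k, c k ∈ A ∧ ∀ y ∈ A, c k * y = y * c k) ∧ x = ∑ k, c k * v k) ∧
    ∀ x : R, ∃ A ∈ S, x ∈ A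

end OddFormRingData

/-- The Jacobson radical of a (possibly noncommutative) ring. -/
def jacobsonRadical (R : Type*) [Ring R] : Ideal R := sInf {J : Ideal R | J.IsMaximal}

/-- `R` is semilocal: `R / rad R` is semisimple (hence semisimple Artinian). -/
def IsSemilocalRing (R : Type*) [Ring R] : Prop :=
  IsSemisimpleModule R (R ⧸ jacobsonRadical R)

/-- A bundled (possibly noncommutative) ring. -/
structure BundledRing : Type (u + 1) where
  carrier : Type u
  [str : Ring carrier]

attribute [instance] BundledRing.str

instance : CoeSort BundledRing (Type u) := ⟨BundledRing.carrier⟩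

universe u

namespace OddFormRingData

variable {R : Type*} [Ring R] (D : OddFormRingData R)

lemma bar_zero : D.bar 0 = 0 := by
  have h : D.bar 0 + D.bar 0 = D.bar 0 + 0 := by rw [← D.bar_add]; simp
  exact add_left_cancel h

lemma bar_neg (x : R) : D.bar (-x) = -D.bar x := by
  have h : D.bar x + D.bar (-x) = 0 := by rw [← D.bar_add]; simp [D.bar_zero]
  exact (neg_eq_of_add_eq_zero_right h).symm

lemma bar_sub (x y : R) : D.bar (x - y) = D.bar x - D.bar y := by
  rw [sub_eq_add_neg, D.bar_add, D.bar_neg, sub_eq_add_neg]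

lemma lam_mul_bar_lam : D.lam * D.bar D.lam = 1 := by
  have h := D.bar_bar 1
  rw [D.bar_one, D.bar_one, mul_one] at h
  exact h.symm

lemma bar_bar_lam : D.bar (D.bar D.lam) = D.lam := by
  rw [D.bar_bar, mul_assoc, D.lam_mul_bar_lam, mul_one]

lemma bar_lam_mul_lam : D.bar D.lam * D.lam = 1 := by
  have hinj := D.bar_bijective.injective
  apply hinj; apply hinj
  rw [D.bar_bar (D.bar D.lam * D.lam), D.bar_one, D.bar_one]
  calc D.lam * (D.bar D.lam * D.lam) * D.bar D.lam
      = (D.lam * D.bar D.lam) * (D.lam * D.bar D.lam) := by noncomm_ring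
    _ = 1 := by rw [D.lam_mul_bar_lam, one_mul]

lemma barlam_lam_cancel (x : R) : D.bar D.lam * (D.lam * x) = x := by
  rw [← mul_assoc, D.bar_lam_mul_lam, one_mul]

lemma bar_mu : D.bar D.mu = D.mu * D.bar D.lam := by
  conv_rhs => rw [D.mu_symm]
  rw [mul_assoc, D.lam_mul_bar_lam, mul_one]

lemma bar_key (a b : R) : D.bar (D.bar a * D.mu * b) * D.lam = D.bar b * D.mu * a := by
  rw [D.bar_mul, D.bar_mul, D.bar_bar, D.bar_mu]
  simp only [mul_assoc, D.barlam_lam_cancel]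
  simp only [D.bar_lam_mul_lam, mul_one]

lemma bar_sum {ι : Type*} (s : Finset ι) (f : ι → R) :
    D.bar (∑ i ∈ s, f i) = ∑ i ∈ s, D.bar (f i) :=
  map_sum (AddMonoidHom.mk' D.bar D.bar_add) f s


/-- The second component of the quadratic form. -/
def q2 {n : ℕ} (f : Idx n → R) : R := ∑ i ∈ posIdx n, D.bar (f i) * f i.neg

/-- Mixed term `∑ f̄ᵢ g₋ᵢ`. -/
def s12 {n : ℕ} (f g : Idx n → R) : R := ∑ i ∈ posIdx n, D.bar (f i) * g i.neg

/-- Mixed term `∑ bar (f₋ᵢ) λ gᵢ`. -/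
def xf {n : ℕ} (f g : Idx n → R) : R := ∑ i ∈ posIdx n, D.bar (f i.neg) * D.lam * g i

lemma qform_eq {n : ℕ} (f : Idx n → R) : D.qform f = (f (Idx.zero n), D.q2 f) := rfl

lemma bform_eq {n : ℕ} (f g : Idx n → R) :
    D.bform f g = D.s12 f g + D.bar (f (Idx.zero n)) * D.mu * g (Idx.zero n) + D.xf f g := rfl

lemma s12_swap {n : ℕ} (f g : Idx n → R) :
    (∑ i ∈ posIdx n, D.bar (g i) * f i.neg) = D.bar (D.xf f g) * D.lam := by
  rw [xf, D.bar_sum, Finset.sum_mul]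
  refine Finset.sum_congr rfl fun i _ => ?_
  rw [D.bar_mul, D.bar_mul, D.bar_bar]
  simp only [mul_assoc, D.barlam_lam_cancel, D.bar_lam_mul_lam, mul_one]

lemma q2_add {n : ℕ} (f g : Idx n → R) :
    D.q2 (f + g) = D.q2 f + D.s12 f g + D.bar (D.xf f g) * D.lam + D.q2 g := by
  rw [← D.s12_swap]
  unfold q2 s12
  rw [← Finset.sum_add_distrib, ← Finset.sum_add_distrib, ← Finset.sum_add_distrib]
  refine Finset.sum_congr rfl fun i _ => ?_
  simp only [Pi.add_apply, D.bar_add]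
  noncomm_ring

lemma q2_single {n : ℕ} (j : Idx n) (x : R) : D.q2 (Pi.single j x) = 0 := by
  refine Finset.sum_eq_zero fun i hi => ?_
  have hip : 0 < i.1 := (Finset.mem_filter.mp hi).2
  rcases eq_or_ne i j with rfl | hne
  · have h : i.neg ≠ i := fun h => by
      have := congrArg Subtype.val h
      simp only [Idx.neg] at this; omega
    rw [Pi.single_eq_of_ne h, mul_zero]
  · rw [Pi.single_eq_of_ne hne, D.bar_zero, zero_mul]

lemma q2_mul_right {n : ℕ} (c : Idx n → R) (x : R) :
    D.q2 (fun i => c i * x) = D.bar x * D.q2 c * x := by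
  unfold q2
  rw [Finset.mul_sum, Finset.sum_mul]
  refine Finset.sum_congr rfl fun i _ => ?_
  rw [D.bar_mul]
  noncomm_ring

lemma s12_single_zero {n : ℕ} (f : Idx n → R) (a : R) :
    D.s12 f (Pi.single (Idx.zero n) a) = 0 := by
  refine Finset.sum_eq_zero fun i hi => ?_
  have hip : 0 < i.1 := (Finset.mem_filter.mp hi).2
  have h : i.neg ≠ Idx.zero n := fun h => by
    have := congrArg Subtype.val h
    simp only [Idx.neg, Idx.zero] at this; omega
  rw [Pi.single_eq_of_ne h, mul_zero]

lemma xf_single_zero {n : ℕ} (f : Idx n → R) (a : R) :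
    D.xf f (Pi.single (Idx.zero n) a) = 0 := by
  refine Finset.sum_eq_zero fun i hi => ?_
  have hip : 0 < i.1 := (Finset.mem_filter.mp hi).2
  have h : i ≠ Idx.zero n := fun h => by
    have := congrArg Subtype.val h
    simp only [Idx.zero] at this; omega
  rw [Pi.single_eq_of_ne h, mul_zero]

lemma hSub_zero (a : R × R) : D.hSub a (0, 0) = a := by
  simp [hSub, hAdd, hNeg, D.bar_zero]

lemma IsInvIdeal.sub_mem {I : Set R} (hI : D.IsInvIdeal I) {x y : R}
    (hx : x ∈ I) (hy : y ∈ I) : x - y ∈ I := by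
  rw [sub_eq_add_neg]; exact hI.add_mem x hx _ (hI.neg_mem y hy)

lemma sum_mem_ideal {I : Set R} (hI : D.IsInvIdeal I) {ι : Type*} (s : Finset ι)
    (f : ι → R) (h : ∀ i ∈ s, f i ∈ I) : (∑ i ∈ s, f i) ∈ I := by
  classical
  induction s using Finset.induction_on with
  | empty => simpa using hI.zero_mem
  | insert _ _ hj ih =>
    rw [Finset.sum_insert hj]
    exact hI.add_mem _ (h _ (Finset.mem_insert_self _ _))
      _ (ih fun i hi => h i (Finset.mem_insert_of_mem hi))

lemma omegaMin_zero_mem (Δ : Set (R × R)) {I : Set R} (hI : D.IsInvIdeal I) :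
    ((0 : R), (0 : R)) ∈ D.OmegaMinSet Δ I := by
  have h := OmegaMin.base (Δ := Δ) (I := I) (D := D) 0 hI.zero_mem
  show D.OmegaMin Δ I ((0 : R), (0 : R)); simpa [D.bar_zero] using h



lemma mulVec_mem_ideal {I : Set R} (hI : D.IsInvIdeal I) {n : ℕ}
    (M : Matrix (Idx n) (Idx n) R) (w : Idx n → R) (hw : ∀ i, w i ∈ I) (i : Idx n) :
    Matrix.mulVec M w i ∈ I := by
  show (∑ k, M i k * w k) ∈ I
  exact D.sum_mem_ideal hI _ _ fun k _ => hI.mul_left _ _ (hw k)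

lemma mulVec_single_old {m ι : Type*} [Fintype ι] [DecidableEq ι] (M : Matrix m ι R)
    (j : ι) (x : R) : Matrix.mulVec M (Pi.single j x) = fun i => M i j * x := by
  funext i; simp [Matrix.mulVec_single]

lemma step {n : ℕ} (Δ : Set (R × R)) {I : Set R} (hI : D.IsInvIdeal I)
    (σ : GLn R n) (hσ : σ ∈ D.unitary Δ n) (j : Idx n) (hj : j.1 ≠ 0) (x : R) (hx : x ∈ I)
    (v : Idx n → R)
    (hFv : D.hSub (D.qform (Matrix.mulVec σ.val v)) (D.qform v) ∈ D.OmegaMinSet Δ I) :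
    D.hSub (D.qform (Matrix.mulVec σ.val (v + Pi.single j x)))
      (D.qform (v + Pi.single j x)) ∈ D.OmegaMinSet Δ I := by
  classical
  have hz0 : Idx.zero n ≠ j := fun h => hj (by rw [← h]; rfl)
  set w : Idx n → R := (Pi.single j x : Idx n → R) with hw
  have hw0 : w (Idx.zero n) = (0 : R) := by rw [hw]; exact Pi.single_eq_of_ne (M := fun _ => R) hz0 x
  have hq2w : D.q2 w = 0 := D.q2_single j x
  have hwI : ∀ i, w i ∈ I := by
    intro i
    rcases eq_or_ne i j with rfl | hne
    · rw [hw]; rw [Pi.single_eq_same]; exact hx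
    · rw [hw]; rw [Pi.single_eq_of_ne (M := fun _ => R) hne]; exact hI.zero_mem
  have hpI : ∀ i, Matrix.mulVec σ.val w i ∈ I :=
    D.mulVec_mem_ideal hI _ _ hwI
  have hxkI : D.xf v w - D.xf (Matrix.mulVec σ.val v) (Matrix.mulVec σ.val w)
      - D.bar (v (Idx.zero n)) * D.mu * Matrix.mulVec σ.val w (Idx.zero n) ∈ I := by
    refine hI.sub_mem (D := D) (hI.sub_mem (D := D) ?_ ?_) (hI.mul_left _ _ (hpI _))
    · exact D.sum_mem_ideal hI _ _ fun i _ => hI.mul_left _ _ (hwI _)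
    · exact D.sum_mem_ideal hI _ _ fun i _ => hI.mul_left _ _ (hpI _)
  -- the quadratic form part of unitarity for the `j`-th column
  have hw1 : (Pi.single j (1 : R) : Idx n → R) (Idx.zero n) = (0 : R) :=
    Pi.single_eq_of_ne hz0 1
  have hq : D.qform (Pi.single j (1 : R) : Idx n → R) = ((0 : R), (0 : R)) := by
    rw [D.qform_eq, D.q2_single, hw1]
  have hdelta : D.qform (Matrix.mulVec σ.val (Pi.single j (1 : R) : Idx n → R)) ∈ Δ := by
    have h2 := hσ.2 (Pi.single j (1 : R) : Idx n → R)
    rwa [hq, D.hSub_zero] at h2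
  have he : D.qform (Matrix.mulVec σ.val w)
      = D.hSMul (D.qform (Matrix.mulVec σ.val (Pi.single j (1 : R) : Idx n → R))) x := by
    rw [hw, OddFormRingData.mulVec_single_old, OddFormRingData.mulVec_single_old]
    simp only [mul_one]
    rw [D.qform_eq, D.qform_eq, D.q2_mul_right]
    rfl
  have hg : D.qform (Matrix.mulVec σ.val w) ∈ D.OmegaMinSet Δ I := by
    rw [he]; exact OmegaMin.smul _ hdelta x hx
  -- the `b`-form part of unitarity
  have hb := hσ.1 v w
  rw [D.bform_eq, D.bform_eq, hw0] at hb
  simp only [mul_zero, add_zero] at hb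
  have heq : D.hSub (D.qform (Matrix.mulVec σ.val (v + w))) (D.qform (v + w))
      = D.hAdd (D.hAdd (D.hSub (D.qform (Matrix.mulVec σ.val v)) (D.qform v))
          (D.qform (Matrix.mulVec σ.val w)))
        (0, (D.xf v w - D.xf (Matrix.mulVec σ.val v) (Matrix.mulVec σ.val w)
            - D.bar (v (Idx.zero n)) * D.mu * Matrix.mulVec σ.val w (Idx.zero n))
          - D.bar (D.xf v w - D.xf (Matrix.mulVec σ.val v) (Matrix.mulVec σ.val w)
            - D.bar (v (Idx.zero n)) * D.mu
                * Matrix.mulVec σ.val w (Idx.zero n)) * D.lam) := by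
    rw [Matrix.mulVec_add]
    simp only [D.qform_eq, D.q2_add, OddFormRingData.hSub, OddFormRingData.hAdd,
      OddFormRingData.hNeg, Pi.add_apply, hw0, hq2w, D.bar_sub, sub_mul, D.bar_add,
      D.bar_neg, D.bar_zero, D.bar_key, zero_mul, mul_zero, add_zero, neg_zero,
      Prod.mk.injEq]
    constructor
    · abel
    · rw [← sub_eq_zero]
      have h2 := sub_eq_zero_of_eq hb
      conv_rhs => rw [← h2]
      noncomm_ring
  rw [heq]
  exact OmegaMin.add _ _ (OmegaMin.add _ _ hFv hg) (OmegaMin.base _ hxkI)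


lemma qform_zero {n : ℕ} : D.qform (fun _ : Idx n => (0 : R)) = ((0 : R), (0 : R)) := by
  rw [D.qform_eq]
  refine Prod.ext rfl ?_
  show D.q2 (fun _ : Idx n => (0 : R)) = 0
  refine Finset.sum_eq_zero fun i _ => ?_
  rw [D.bar_zero, zero_mul]

lemma aux_induction {n : ℕ} (Δ : Set (R × R)) {I : Set R} (hI : D.IsInvIdeal I)
    (σ : GLn R n) (hσ : σ ∈ D.unitary Δ n) (s : Finset (Idx n)) :
    ∀ v : Idx n → R, (∀ i ∈ s, i.1 ≠ 0) → (∀ i ∈ s, v i ∈ I) → (∀ i, i ∉ s → v i = 0) →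
      D.hSub (D.qform (Matrix.mulVec σ.val v)) (D.qform v) ∈ D.OmegaMinSet Δ I := by
  classical
  induction s using Finset.induction_on with
  | empty =>
    intro v _ _ h0
    have hv : v = fun _ => (0 : R) := funext fun i => h0 i (Finset.notMem_empty i)
    subst hv
    have hmv : Matrix.mulVec σ.val (fun _ : Idx n => (0 : R)) = fun _ : Idx n => (0 : R) := by
      funext i
      show (∑ k, σ.val i k * 0) = 0
      simp
    rw [hmv, D.qform_zero, D.hSub_zero]
    exact D.omegaMin_zero_mem Δ hI
  | @insert j t hjt ih =>
    intro v hne hvI h0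
    have hdec : v = Function.update v j 0 + Pi.single j (v j) := by
      funext i
      rcases eq_or_ne i j with rfl | hne'
      · simp
      · simp [Function.update_of_ne hne', Pi.single_eq_of_ne (M := fun _ => R) hne']
    rw [hdec]
    refine D.step Δ hI σ hσ j (hne j (Finset.mem_insert_self j t)) (v j)
      (hvI j (Finset.mem_insert_self j t)) _ (ih _ ?_ ?_ ?_)
    · exact fun i hi => hne i (Finset.mem_insert_of_mem hi)
    · intro i hi
      have hne' : i ≠ j := fun h => hjt (h ▸ hi)
      rw [Function.update_of_ne hne']
      exact hvI i (Finset.mem_insert_of_mem hi)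
    · intro i hi
      rcases eq_or_ne i j with rfl | hne'
      · simp
      · rw [Function.update_of_ne hne']
        exact h0 i fun h => hi (Finset.mem_of_mem_insert_of_ne h hne')


end OddFormRingData

/-- For `σ ∈ U_{2n+1}(R, Δ)` and `u ∈ M(I)`,
`q(σu) ∸ q(u) ≡ (q(σ_*0) ∸ (1,0)) • u₀ (mod Ω^I_min)`. -/
theorem statement14 {R : Type*} [Ring R] [Nontrivial R] (D : OddFormRingData R)
    (Δ : Set (R × R)) (hΔ : D.IsFormParam Δ) (n : ℕ)
    (I : Set R) (hI : D.IsInvIdeal I)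
    (σ : GLn R n) (hσ : σ ∈ D.unitary Δ n)
    (u : Idx n → R) (hu : ∀ i : Idx n, i.1 ≠ 0 → u i ∈ I) :
    D.hSub (D.hSub (D.qform (Matrix.mulVec σ.val u)) (D.qform u))
        (D.hSMul (D.hSub (D.qform (fun i => σ.val i (Idx.zero n))) (1, 0)) (u (Idx.zero n)))
      ∈ D.OmegaMinSet Δ I := by
  classical
  open OddFormRingData in
  obtain ⟨u', hu'I, hu'0, hdec⟩ : ∃ u' : Idx n → R, (∀ i, u' i ∈ I) ∧ u' (Idx.zero n) = 0
      ∧ u = u' + Pi.single (Idx.zero n) (u (Idx.zero n)) := by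
    refine ⟨Function.update u (Idx.zero n) 0, ?_, Function.update_self _ _ _, ?_⟩
    · intro i
      rcases eq_or_ne i (Idx.zero n) with rfl | hne
      · rw [Function.update_self]; exact hI.zero_mem
      · rw [Function.update_of_ne hne]
        refine hu i fun h => hne (Subtype.ext ?_)
        simpa [Idx.zero] using h
    · funext i
      rcases eq_or_ne i (Idx.zero n) with rfl | hne
      · simp
      · simp [Function.update_of_ne hne, Pi.single_eq_of_ne (M := fun _ => R) hne]
  -- the half-basis part lies in `Ω^I_min` by induction on coordinates
  have hFu' : D.hSub (D.qform (Matrix.mulVec σ.val u')) (D.qform u') ∈ D.OmegaMinSet Δ I := by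
    refine D.aux_induction Δ hI σ hσ (Finset.univ.filter fun i : Idx n => i.1 ≠ 0) u'
      (fun i hi => (Finset.mem_filter.mp hi).2) (fun i _ => hu'I i) ?_
    intro i hi
    have h0 : i.1 = 0 := by
      by_contra h
      exact hi (Finset.mem_filter.mpr ⟨Finset.mem_univ i, h⟩)
    have : i = Idx.zero n := Subtype.ext (by simpa [Idx.zero] using h0)
    rw [this]; exact hu'0
  -- membership of the central correction term
  have hxkI : -(D.xf (Matrix.mulVec σ.val u')
      (fun i => σ.val i (Idx.zero n) * u (Idx.zero n))) ∈ I := by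
    refine hI.neg_mem _ (D.sum_mem_ideal hI _ _ fun i _ => ?_)
    exact hI.mul_right _ _ (hI.mul_right _ _
      (hI.bar_mem _ (D.mulVec_mem_ideal hI _ _ hu'I _)))
  -- the `b`-form part of unitarity
  have hb := hσ.1 u' (Pi.single (Idx.zero n) (u (Idx.zero n)))
  rw [OddFormRingData.mulVec_single_old, D.bform_eq, D.bform_eq, D.s12_single_zero, D.xf_single_zero,
    hu'0, D.bar_zero] at hb
  simp only [zero_mul, mul_zero, add_zero, zero_add] at hb
  have heq : D.hSub (D.hSub (D.qform (Matrix.mulVec σ.val u)) (D.qform u))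
        (D.hSMul (D.hSub (D.qform (fun i => σ.val i (Idx.zero n))) (1, 0)) (u (Idx.zero n)))
      = D.hAdd (D.hSub (D.qform (Matrix.mulVec σ.val u')) (D.qform u'))
        (0, -(D.xf (Matrix.mulVec σ.val u')
              (fun i => σ.val i (Idx.zero n) * u (Idx.zero n)))
          - D.bar (-(D.xf (Matrix.mulVec σ.val u')
              (fun i => σ.val i (Idx.zero n) * u (Idx.zero n)))) * D.lam) := by
    rw [hdec, Matrix.mulVec_add, OddFormRingData.mulVec_single_old]
    simp only [D.qform_eq, D.q2_add, OddFormRingData.hSub, OddFormRingData.hAdd,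
      OddFormRingData.hNeg, OddFormRingData.hSMul, Pi.add_apply, Pi.single_eq_same,
      hu'0, D.s12_single_zero, D.xf_single_zero, D.q2_single, D.q2_mul_right,
      D.bar_add, D.bar_neg, D.bar_zero, D.bar_one, D.bar_mul, zero_mul, mul_zero,
      add_zero, zero_add, neg_zero, Prod.mk.injEq]
    constructor
    · noncomm_ring
    · rw [← sub_eq_zero]
      conv_rhs => rw [← hb]
      noncomm_ring
  rw [heq]
  exact OddFormRingData.OmegaMin.add _ _ hFu' (OddFormRingData.OmegaMin.base _ hxkI)
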